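/- Every jewel contains an induced C5, an induced bull, or an induced anchor. -/

import Mathlib

open SimpleGraph

/-- The bull: a triangle 0,1,2 with pendant edges 0–3 and 1–4. -/
def bull : SimpleGraph (Fin 5) :=
  SimpleGraph.fromRel (fun a b =>
    (a, b) ∈ [((0 : Fin 5), (1 : Fin 5)), (0, 2), (1, 2), (0, 3), (1, 4)])

/-- `G` has an induced copy of `H`. -/
def Contains {V W : Type*} (G : SimpleGraph V) (H : SimpleGraph W) : Prop :=
  Nonempty (H ↪g G)

/-- `G` has an odd hole: an induced cycle of odd length at least 5. -/
def HasOddHole {V : Type*} (G : SimpleGraph V) : Prop :=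
  ∃ n, 5 ≤ n ∧ Odd n ∧ Nonempty (SimpleGraph.cycleGraph n ↪g G)

/-- `e` exhibits a shortest odd hole in `G`. -/
def IsShortestOddHole {V : Type*} (G : SimpleGraph V) {k : ℕ}
    (_e : SimpleGraph.cycleGraph k ↪g G) : Prop :=
  5 ≤ k ∧ Odd k ∧ ∀ m, 5 ≤ m → Odd m → Nonempty (SimpleGraph.cycleGraph m ↪g G) → k ≤ m

/-- The hole given by `e` is clean: the neighbours on the hole of any vertex off the hole
are contained in a two-edge path `i-1, i, i+1` of the hole. -/
def CleanHole {V : Type*} (G : SimpleGraph V) {k : ℕ}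
    (e : SimpleGraph.cycleGraph k ↪g G) : Prop :=
  ∀ v : V, (∀ j, e j ≠ v) →
    ∃ i : Fin k, ∀ j, G.Adj v (e j) → j = i ∨ (SimpleGraph.cycleGraph k).Adj i j

/-- `G` is pure: it has no odd hole, or some shortest odd hole of `G` is clean. -/
def IsPure {V : Type*} (G : SimpleGraph V) : Prop :=
  ¬ HasOddHole G ∨
    ∃ (k : ℕ) (e : SimpleGraph.cycleGraph k ↪g G), IsShortestOddHole G e ∧ CleanHole G e

/-- `p`, `c`, `a` form an anchor in `G`: `p` is an induced 4-vertex path, `c` is complete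
to it, and `a` is anticomplete to it. -/
def IsAnchorIn {V : Type*} (G : SimpleGraph V) (p : Fin 4 → V) (c a : V) : Prop :=
  Function.Injective p ∧ (∀ i, c ≠ p i) ∧ (∀ i, a ≠ p i) ∧ a ≠ c ∧
  (∀ i j : Fin 4, G.Adj (p i) (p j) ↔ ((i : ℕ) + 1 = j ∨ (j : ℕ) + 1 = i)) ∧
  (∀ i, G.Adj c (p i)) ∧ (∀ i, ¬ G.Adj a (p i))

/-- `G` contains an anchor. -/
def ContainsAnchor {V : Type*} (G : SimpleGraph V) : Prop :=
  ∃ p c a, IsAnchorIn G p c a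

/-- `X` is a homogeneous set of `G`. -/
def IsHomogeneousSet {V : Type*} [Fintype V] (G : SimpleGraph V) (X : Finset V) : Prop :=
  1 < X.card ∧ X.card < Fintype.card V ∧
    ∀ v ∉ X, (∀ x ∈ X, G.Adj v x) ∨ (∀ x ∈ X, ¬ G.Adj v x)

set_option maxHeartbeats 1000000 in
/-- Every jewel (on vertex set {v 0, …, v 4} ∪ F, where v 0,…,v 4 play the roles of
v1,…,v5) contains an induced C5, an induced bull, or an induced anchor. -/
theorem stmt_5 {V : Type*} (G : SimpleGraph V)
    (v : Fin 5 → V) (F : Set V)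
    (hinj : Function.Injective v) (hdisj : ∀ i, v i ∉ F)
    (hconn : (G.induce F).Connected)
    (he01 : G.Adj (v 0) (v 1)) (he12 : G.Adj (v 1) (v 2)) (he23 : G.Adj (v 2) (v 3))
    (he34 : G.Adj (v 3) (v 4)) (he40 : G.Adj (v 4) (v 0))
    (hn02 : ¬ G.Adj (v 0) (v 2)) (hn13 : ¬ G.Adj (v 1) (v 3)) (hn03 : ¬ G.Adj (v 0) (v 3))
    (hF1 : ∀ x ∈ F, ¬ G.Adj (v 1) x) (hF2 : ∀ x ∈ F, ¬ G.Adj (v 2) x)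
    (hF4 : ∀ x ∈ F, ¬ G.Adj (v 4) x)
    (hv0 : ∃ x ∈ F, G.Adj (v 0) x) (hv3 : ∃ x ∈ F, G.Adj (v 3) x)
    (hcover : ∀ x : V, x ∈ F ∨ ∃ i, x = v i) :
    Contains G (SimpleGraph.cycleGraph 5) ∨ Contains G bull ∨ ContainsAnchor G := by
  have hn20 : ¬ G.Adj (v 2) (v 0) := fun h => hn02 h.symm
  have hn31 : ¬ G.Adj (v 3) (v 1) := fun h => hn13 h.symm
  have hn30 : ¬ G.Adj (v 3) (v 0) := fun h => hn03 h.symm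
  by_cases hboth : ∃ x ∈ F, G.Adj (v 0) x ∧ G.Adj (v 3) x
  · -- C5 on x, v0, v1, v2, v3
    obtain ⟨x, hxF, hx0, hx3⟩ := hboth
    have hxv : ∀ i, x ≠ v i := fun i h => hdisj i (h ▸ hxF)
    have hvx : ∀ i, v i ≠ x := fun i h => hxv i h.symm
    have hx1 : ¬ G.Adj x (v 1) := fun h => hF1 x hxF h.symm
    have hx2 : ¬ G.Adj x (v 2) := fun h => hF2 x hxF h.symm
    have h1x : ¬ G.Adj (v 1) x := hF1 x hxF
    have h2x : ¬ G.Adj (v 2) x := hF2 x hxF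
    have h0x : G.Adj (v 0) x := hx0
    have h3x : G.Adj (v 3) x := hx3
    refine Or.inl ⟨⟨![x, v 0, v 1, v 2, v 3], ?_⟩, ?_⟩
    · intro i j hij
      fin_cases i <;> fin_cases j <;>
        first
          | rfl
          | exact absurd (hinj hij) (by decide)
          | exact absurd hij (hxv _)
          | exact absurd hij (hvx _)
    · intro i j
      fin_cases i <;> fin_cases j <;>
        simp only [Matrix.cons_val', Matrix.cons_val_zero, Matrix.cons_val_one, Matrix.head_cons,
              Matrix.cons_val_fin_one, Matrix.cons_val_succ] <;>
          first
          | exact iff_of_false (G.irrefl) (by decide)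
          | exact iff_of_true (by first | assumption | (apply G.adj_symm; assumption)) (by decide)
          | exact iff_of_false (by assumption) (by decide)
  · push_neg at hboth
    by_cases hc14 : G.Adj (v 1) (v 4)
    · -- bull on v0, v4, v1, x, v3
      obtain ⟨x, hxF, hx0⟩ := hv0
      have hx3 : ¬ G.Adj (v 3) x := fun h => hboth x hxF hx0 h
      have h3x : ¬ G.Adj x (v 3) := fun h => hx3 h.symm
      have hxv : ∀ i, x ≠ v i := fun i h => hdisj i (h ▸ hxF)
      have hvx : ∀ i, v i ≠ x := fun i h => hxv i h.symm
      have hx1 : ¬ G.Adj x (v 1) := fun h => hF1 x hxF h.symm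
      have h1x : ¬ G.Adj (v 1) x := hF1 x hxF
      have hx4 : ¬ G.Adj x (v 4) := fun h => hF4 x hxF h.symm
      have h4x : ¬ G.Adj (v 4) x := hF4 x hxF
      have h0x : G.Adj (v 0) x := hx0
      refine Or.inr (Or.inl ⟨⟨![v 0, v 4, v 1, x, v 3], ?_⟩, ?_⟩)
      · intro i j hij
        fin_cases i <;> fin_cases j <;>
          first
            | rfl
            | exact absurd (hinj hij) (by decide)
            | exact absurd hij (hxv _)
            | exact absurd hij (hvx _)
      · intro i j
        fin_cases i <;> fin_cases j <;>
          simp only [Matrix.cons_val', Matrix.cons_val_zero, Matrix.cons_val_one, Matrix.head_cons,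
              Matrix.cons_val_fin_one, Matrix.cons_val_succ] <;>
          first
            | exact iff_of_false (G.irrefl) (by simp only [bull, fromRel_adj]; decide)
            | exact iff_of_true (by first | assumption | (apply G.adj_symm; assumption))
                (by simp only [bull, fromRel_adj]; decide)
            | exact iff_of_false (by assumption) (by simp only [bull, fromRel_adj]; decide)
    · by_cases hc24 : G.Adj (v 2) (v 4)
      · -- bull on v2, v3, v4, v1, x
        obtain ⟨x, hxF, hx3⟩ := hv3
        have hxv : ∀ i, x ≠ v i := fun i h => hdisj i (h ▸ hxF)
        have hvx : ∀ i, v i ≠ x := fun i h => hxv i h.symm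
        have hx1 : ¬ G.Adj x (v 1) := fun h => hF1 x hxF h.symm
        have h1x : ¬ G.Adj (v 1) x := hF1 x hxF
        have hx2 : ¬ G.Adj x (v 2) := fun h => hF2 x hxF h.symm
        have h2x : ¬ G.Adj (v 2) x := hF2 x hxF
        have hx4 : ¬ G.Adj x (v 4) := fun h => hF4 x hxF h.symm
        have h4x : ¬ G.Adj (v 4) x := hF4 x hxF
        have hc41 : ¬ G.Adj (v 4) (v 1) := fun h => hc14 h.symm
        have h3x : G.Adj (v 3) x := hx3
        refine Or.inr (Or.inl ⟨⟨![v 2, v 3, v 4, v 1, x], ?_⟩, ?_⟩)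
        · intro i j hij
          fin_cases i <;> fin_cases j <;>
            first
              | rfl
              | exact absurd (hinj hij) (by decide)
              | exact absurd hij (hxv _)
              | exact absurd hij (hvx _)
        · intro i j
          fin_cases i <;> fin_cases j <;>
            simp only [Matrix.cons_val', Matrix.cons_val_zero, Matrix.cons_val_one, Matrix.head_cons,
              Matrix.cons_val_fin_one, Matrix.cons_val_succ] <;>
          first
              | exact iff_of_false (G.irrefl) (by simp only [bull, fromRel_adj]; decide)
              | exact iff_of_true (by first | assumption | (apply G.adj_symm; assumption))
                  (by simp only [bull, fromRel_adj]; decide)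
              | exact iff_of_false (by assumption) (by simp only [bull, fromRel_adj]; decide)
      · -- C5 on v0..v4
        have hc41 : ¬ G.Adj (v 4) (v 1) := fun h => hc14 h.symm
        have hc42 : ¬ G.Adj (v 4) (v 2) := fun h => hc24 h.symm
        refine Or.inl ⟨⟨v, hinj⟩, ?_⟩
        intro i j
        fin_cases i <;> fin_cases j <;>
          simp only [Matrix.cons_val', Matrix.cons_val_zero, Matrix.cons_val_one, Matrix.head_cons,
              Matrix.cons_val_fin_one, Matrix.cons_val_succ] <;>
          first
            | exact iff_of_false (G.irrefl) (by decide)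
            | exact iff_of_true (by first | assumption | (apply G.adj_symm; assumption)) (by decide)
            | exact iff_of_false (by assumption) (by decide)
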